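/- Let g : ℝⁿ → ℝ ∪ {+∞} be proper, lsc and convex, c ∈ ℝⁿ₊, and consider the alternating minimization iteration x^{k+1} ∈ prox_g(Re(P_{Z_c}(x^k))) starting from any x⁰ ∈ ℝⁿ. Then the objective values K^k = min_{z ∈ Z_c} ½‖x^k − z‖₂² + g(x^k) satisfy K^{k+1} + ½‖x^{k+1} − x^k‖₂² ≤ K^k for all k; in particular the sequence {K^k} is nonincreasing and Σ_k ‖x^{k+1} − x^k‖₂² < ∞ whenever inf_x (min_{z∈Z_c} ½‖x−z‖₂² + g(x)) > −∞. -/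

import Mathlib

open scoped RealInnerProductSpace

private lemma norm_combo_sq {E : Type*} [NormedAddCommGroup E] [InnerProductSpace ℝ E]
    (v w : E) (t : ℝ) :
    ‖(1-t)•v + t•w‖^2 = (1-t)*‖v‖^2 + t*‖w‖^2 - t*(1-t)*‖v-w‖^2 := by
  have h1 : ∀ u : E, ‖u‖^2 = ⟪u,u⟫ := fun u => (real_inner_self_eq_norm_sq u).symm
  simp only [h1, inner_add_left, inner_add_right, inner_sub_left, inner_sub_right,
    real_inner_smul_left, real_inner_smul_right]
  simp only [real_inner_comm w v]
  ring


/-- Unnormalized discrete Fourier transform on `ℂⁿ`. -/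
noncomputable def dft (n : ℕ) (x : EuclideanSpace ℂ (Fin n)) : EuclideanSpace ℂ (Fin n) :=
  WithLp.toLp 2 (fun j : Fin n => ∑ t : Fin n, x t *
    Complex.exp (-2 * Real.pi * Complex.I * (j : ℕ) * (t : ℕ) / n))

/-- Embedding of `ℝⁿ` into `ℂⁿ`. -/
noncomputable def embed (n : ℕ) (x : EuclideanSpace ℝ (Fin n)) : EuclideanSpace ℂ (Fin n) :=
  WithLp.toLp 2 (fun j => (x j : ℂ))

/-- Componentwise real part, `ℂⁿ → ℝⁿ`. -/
noncomputable def rePart (n : ℕ) (z : EuclideanSpace ℂ (Fin n)) : EuclideanSpace ℝ (Fin n) :=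
  WithLp.toLp 2 (fun j => (z j).re)

private lemma decomp (n : ℕ) (y : EuclideanSpace ℝ (Fin n)) (z : EuclideanSpace ℂ (Fin n)) :
    ‖embed n y - z‖^2 = ‖rePart n z - y‖^2 + ∑ j, ((z j).im)^2 := by
  have hn : ∀ (𝕜 : Type) (_ : RCLike 𝕜) (x : EuclideanSpace 𝕜 (Fin n)), ‖x‖^2 = ∑ i, ‖x i‖^2 := by
    intro 𝕜 _ x
    rw [EuclideanSpace.norm_eq, Real.sq_sqrt (Finset.sum_nonneg fun i _ => sq_nonneg _)]
  rw [hn ℂ _ _, hn ℝ _ _, ← Finset.sum_add_distrib]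
  apply Finset.sum_congr rfl
  intro j _
  have h1 : (embed n y - z) j = (y j : ℂ) - z j := by simp [embed]
  have h2 : (rePart n z - y) j = (z j).re - y j := by simp [rePart]
  rw [h1, h2]
  rw [Complex.sq_norm, Complex.normSq_apply, Real.norm_eq_abs, sq_abs]
  simp [Complex.sub_re, Complex.sub_im]
  ring

private lemma strong_conv {n : ℕ} (g : EuclideanSpace ℝ (Fin n) → EReal)
    (hNotBot : ∀ x, g x ≠ ⊥)
    (hConv : ∀ x y : EuclideanSpace ℝ (Fin n), ∀ a b : ℝ, 0 ≤ a → 0 ≤ b → a + b = 1 →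
      g (a • x + b • y) ≤ (a : EReal) * g x + (b : EReal) * g y)
    (u xs : EuclideanSpace ℝ (Fin n))
    (hmin : ∀ y, ((1/2 * ‖u - xs‖^2 : ℝ) : EReal) + g xs ≤ ((1/2 * ‖u - y‖^2 : ℝ) : EReal) + g y)
    (hfin : g xs ≠ ⊤)
    (y : EuclideanSpace ℝ (Fin n)) (hy : g y ≠ ⊤) :
    1/2 * ‖u - xs‖^2 + (g xs).toReal + 1/2 * ‖xs - y‖^2
      ≤ 1/2 * ‖u - y‖^2 + (g y).toReal := by
  have hga : g xs = (((g xs).toReal : ℝ) : EReal) := (EReal.coe_toReal hfin (hNotBot xs)).symm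
  have hgb : g y = (((g y).toReal : ℝ) : EReal) := (EReal.coe_toReal hy (hNotBot y)).symm
  set a := (g xs).toReal
  set b := (g y).toReal
  have key : ∀ t : ℝ, 0 < t → t < 1 →
      1/2*‖u-xs‖^2 + a + (1-t)/2*‖xs-y‖^2 ≤ 1/2*‖u-y‖^2 + b := by
    intro t ht ht1
    set yt := (1-t)•xs + t•y with hytdef
    have hgyt : g yt ≤ (((1-t)*a + t*b : ℝ) : EReal) := by
      calc g yt ≤ ((1-t : ℝ):EReal)*g xs + ((t:ℝ):EReal)*g y :=
            hConv xs y (1-t) t (by linarith) ht.le (by ring)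
        _ = (((1-t)*a + t*b : ℝ) : EReal) := by
            rw [hga, hgb, ← EReal.coe_mul, ← EReal.coe_mul, ← EReal.coe_add]
    have hm : ((1/2 * ‖u - xs‖^2 : ℝ) : EReal) + ((a:ℝ):EReal)
        ≤ ((1/2*‖u-yt‖^2 : ℝ):EReal) + (((1-t)*a+t*b : ℝ):EReal) := by
      have := (hmin yt).trans (add_le_add le_rfl hgyt)
      rwa [hga] at this
    rw [← EReal.coe_add, ← EReal.coe_add, EReal.coe_le_coe_iff] at hm
    have hyt : u - yt = (1-t)•(u - xs) + t•(u - y) := by rw [hytdef]; module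
    have hns : ‖u - yt‖^2 = (1-t)*‖u-xs‖^2 + t*‖u-y‖^2 - t*(1-t)*‖(u-xs)-(u-y)‖^2 := by
      rw [hyt]; exact norm_combo_sq _ _ _
    have hvw : (u - xs) - (u - y) = y - xs := by abel
    have hnyx : ‖y - xs‖ = ‖xs - y‖ := norm_sub_rev _ _
    rw [hvw, hnyx] at hns
    rw [hns] at hm
    have h2 : t * (1/2*‖u-xs‖^2 + a + (1-t)/2*‖xs-y‖^2) ≤ t * (1/2*‖u-y‖^2 + b) := by
      nlinarith [hm]
    exact le_of_mul_le_mul_left h2 ht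
  refine le_of_forall_pos_le_add fun ε hε => ?_
  set C := ‖xs - y‖^2 with hCdef
  have hC : 0 ≤ C := sq_nonneg _
  set t := min (1/2 : ℝ) (ε / (C+1)) with htdef
  have ht : 0 < t := lt_min (by norm_num) (div_pos hε (by linarith))
  have ht1 : t < 1 := lt_of_le_of_lt (min_le_left _ _) (by norm_num)
  have hk := key t ht ht1
  have htc : t * C ≤ ε := by
    have h1 : t ≤ ε / (C+1) := min_le_right _ _
    have h2 : t * C ≤ (ε/(C+1)) * C := mul_le_mul_of_nonneg_right h1 hC
    have h3 : (ε/(C+1)) * C ≤ ε := by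
      rw [div_mul_eq_mul_div, div_le_iff₀ (by linarith)]
      nlinarith
    linarith
  linarith
/-- sufficient decrease of alternating minimization / Fienup: for the
iteration `z^{k+1} ∈ P_{Z_c}(x^k)`, `x^{k+1} = prox_g(Re z^{k+1})`, the objective values
`K^k = min_{z∈Z_c} ½‖x^k − z‖² + g(x^k)` satisfy
`K^{k+1} + ½‖x^{k+1} − x^k‖² ≤ K^k`; hence `{K^k}` is nonincreasing and
`Σ_k ‖x^{k+1} − x^k‖² < ∞` whenever the objective is bounded below. -/
theorem fienup_sufficient_decrease (n : ℕ) (hn : 0 < n)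
    (c : Fin n → ℝ) (hc : ∀ j, 0 ≤ c j)
    (g : EuclideanSpace ℝ (Fin n) → EReal)
    (hProper : ∃ x, g x ≠ ⊤) (hNotBot : ∀ x, g x ≠ ⊥)
    (hLsc : LowerSemicontinuous g)
    (hConv : ∀ x y : EuclideanSpace ℝ (Fin n), ∀ a b : ℝ, 0 ≤ a → 0 ≤ b → a + b = 1 →
      g (a • x + b • y) ≤ (a : EReal) * g x + (b : EReal) * g y)
    (x : ℕ → EuclideanSpace ℝ (Fin n)) (z : ℕ → EuclideanSpace ℂ (Fin n))
    (hzmem : ∀ k, ∀ j, ‖dft n (z (k+1)) j‖ = c j)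
    (hzmin : ∀ k, ∀ z' : EuclideanSpace ℂ (Fin n), (∀ j, ‖dft n z' j‖ = c j) →
      ‖embed n (x k) - z (k+1)‖ ≤ ‖embed n (x k) - z'‖)
    (hxprox : ∀ k, ∀ y : EuclideanSpace ℝ (Fin n),
      ((1/2 * ‖rePart n (z (k+1)) - x (k+1)‖^2 : ℝ) : EReal) + g (x (k+1))
        ≤ ((1/2 * ‖rePart n (z (k+1)) - y‖^2 : ℝ) : EReal) + g y)
    (K : ℕ → EReal)
    (hK : ∀ k, K k = sInf {e : EReal | ∃ zz : EuclideanSpace ℂ (Fin n),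
        (∀ j, ‖dft n zz j‖ = c j) ∧
        e = ((1/2 * ‖embed n (x k) - zz‖^2 : ℝ) : EReal)} + g (x k)) :
    (∀ k, K (k+1) + ((1/2 * ‖x (k+1) - x k‖^2 : ℝ) : EReal) ≤ K k) ∧
    Antitone K ∧
    ((∃ m : ℝ, ∀ y : EuclideanSpace ℝ (Fin n),
        (m : EReal) ≤ sInf {e : EReal | ∃ zz : EuclideanSpace ℂ (Fin n),
          (∀ j, ‖dft n zz j‖ = c j) ∧
          e = ((1/2 * ‖embed n y - zz‖^2 : ℝ) : EReal)} + g y) →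
      Summable (fun k => ‖x (k+1) - x k‖^2)) := by
  -- the infimum is attained at z (k+1)
  have hKval : ∀ k, sInf {e : EReal | ∃ zz : EuclideanSpace ℂ (Fin n),
      (∀ j, ‖dft n zz j‖ = c j) ∧
      e = ((1/2 * ‖embed n (x k) - zz‖^2 : ℝ) : EReal)}
      = ((1/2 * ‖embed n (x k) - z (k+1)‖^2 : ℝ) : EReal) := by
    intro k
    apply IsLeast.csInf_eq
    constructor
    · exact ⟨z (k+1), hzmem k, rfl⟩
    · rintro e ⟨zz, hzz, rfl⟩
      apply EReal.coe_le_coe_iff.mpr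
      have h := hzmin k zz hzz
      nlinarith [norm_nonneg (embed n (x k) - z (k+1))]
  obtain ⟨x₀, hx₀⟩ := hProper
  have hgfin : ∀ k, g (x (k+1)) ≠ ⊤ := by
    intro k hTop
    have h := hxprox k x₀
    rw [hTop, EReal.coe_add_top] at h
    exact (EReal.add_lt_top (EReal.coe_ne_top _) hx₀).ne (top_le_iff.mp h)
  have step : ∀ k, K (k+1) + ((1/2 * ‖x (k+1) - x k‖^2 : ℝ) : EReal) ≤ K k := by
    intro k
    rw [hK k, hK (k+1), hKval k, hKval (k+1)]
    by_cases hgk : g (x k) = ⊤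
    · rw [hgk, EReal.coe_add_top]; exact le_top
    have hsc := strong_conv g hNotBot hConv (rePart n (z (k+1))) (x (k+1)) (hxprox k)
      (hgfin k) (x k) hgk
    rw [← EReal.coe_toReal (hgfin k) (hNotBot _), ← EReal.coe_toReal hgk (hNotBot _)]
    rw [← EReal.coe_add, ← EReal.coe_add, ← EReal.coe_add]
    apply EReal.coe_le_coe_iff.mpr
    have h1 : ‖embed n (x (k+1)) - z (k+1+1)‖ ≤ ‖embed n (x (k+1)) - z (k+1)‖ :=
      hzmin (k+1) (z (k+1)) (hzmem k)
    have h1' : ‖embed n (x (k+1)) - z (k+1+1)‖^2 ≤ ‖embed n (x (k+1)) - z (k+1)‖^2 := by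
      nlinarith [norm_nonneg (embed n (x (k+1)) - z (k+1+1))]
    have hd1 := decomp n (x (k+1)) (z (k+1))
    have hd0 := decomp n (x k) (z (k+1))
    linarith
  refine ⟨step, ?_, ?_⟩
  · apply antitone_nat_of_succ_le
    intro k
    refine le_trans ?_ (step k)
    exact le_add_of_nonneg_right (by exact_mod_cast (by positivity : (0:ℝ) ≤ 1/2 * ‖x (k+1) - x k‖^2))
  · rintro ⟨m, hm⟩
    have hKge : ∀ k, (m : EReal) ≤ K k := by intro k; rw [hK k]; exact hm (x k)
    have hKne_top : ∀ k, K (k+1) ≠ ⊤ := by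
      intro k
      rw [hK (k+1), hKval (k+1)]
      exact (EReal.add_lt_top (EReal.coe_ne_top _) (hgfin k)).ne
    have hKne_bot : ∀ k, K k ≠ ⊥ := by
      intro k h
      exact absurd (h ▸ hKge k) (by simp)
    set r : ℕ → ℝ := fun k => (K (k+1)).toReal with hrdef
    have hr : ∀ k, K (k+1) = ((r k : ℝ) : EReal) :=
      fun k => (EReal.coe_toReal (hKne_top k) (hKne_bot _)).symm
    have hmr : ∀ k, m ≤ r k := fun k => EReal.coe_le_coe_iff.mp ((hKge (k+1)).trans_eq (hr k))
    have hstep : ∀ k, r (k+1) + 1/2 * ‖x (k+2) - x (k+1)‖^2 ≤ r k := by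
      intro k
      have h := step (k+1)
      rw [hr (k+1), hr k, ← EReal.coe_add] at h
      exact EReal.coe_le_coe_iff.mp h
    have htel : ∀ N, ∑ i ∈ Finset.range N, 1/2 * ‖x (i+2) - x (i+1)‖^2 ≤ r 0 - r N := by
      intro N
      induction N with
      | zero => simp
      | succ N ih =>
        rw [Finset.sum_range_succ]
        have := hstep N
        linarith
    have hsum : ∀ N, ∑ i ∈ Finset.range N, ‖x (i+2) - x (i+1)‖^2 ≤ 2*(r 0 - m) := by
      intro N
      have h1 := htel N
      have h2 := hmr N
      have h3 : ∑ i ∈ Finset.range N, ‖x (i+2) - x (i+1)‖^2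
          = 2 * ∑ i ∈ Finset.range N, 1/2 * ‖x (i+2) - x (i+1)‖^2 := by
        rw [Finset.mul_sum]
        apply Finset.sum_congr rfl
        intros; ring
      linarith
    have hS : Summable (fun k => ‖x (k+2) - x (k+1)‖^2) :=
      summable_of_sum_range_le (fun k => sq_nonneg _) hsum
    exact (summable_nat_add_iff 1).mp hS
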